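/- Let A be an N×N complex matrix, let C and D be M×N complex matrices, let η ∈ ℂ, and let z₀, g ∈ ℂ^N satisfy (η·I_N − A)·z₀ = g and C·z₀ + D·g = 0. Let z : ℝ → ℂ^N be differentiable with z'(t) = A·z(t) for all t. Then the function ž(t) := z(t) + e^{ηt}·z₀ satisfies, for all t ∈ ℝ: (i) ž'(t) = A·ž(t) + e^{ηt}·g, and (ii) C·ž(t) + D·(e^{ηt}·g) = C·z(t). In other words, the zero-dynamics attack signal ğ(t) = g·e^{ηt} shifts the state trajectory by e^{ηt}·z₀ while producing exactly the same output as the unattacked system. -/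

import Mathlib

open Matrix

/-- Zero-dynamics attack invariance (Definition 2 / Proposition 2):
if `(η I - A) z₀ = g` and `C z₀ + D g = 0`, and `z` solves `ż = A z`, then
`ž(t) = z(t) + e^{ηt} z₀` solves `ž' = A ž + e^{ηt} g` and produces the same output. -/
theorem stmt_0 {N M : ℕ}
    (A : Matrix (Fin N) (Fin N) ℂ) (C D : Matrix (Fin M) (Fin N) ℂ)
    (η : ℂ) (z₀ g : Fin N → ℂ)
    (hker1 : (η • (1 : Matrix (Fin N) (Fin N) ℂ) - A).mulVec z₀ = g)
    (hker2 : C.mulVec z₀ + D.mulVec g = 0)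
    (z : ℝ → Fin N → ℂ)
    (hz : ∀ (t : ℝ) (i : Fin N), HasDerivAt (fun s : ℝ => z s i) (A.mulVec (z t) i) t) :
    ∀ t : ℝ,
      (∀ i : Fin N,
        HasDerivAt (fun s : ℝ => z s i + Complex.exp (η * (s : ℂ)) * z₀ i)
          (A.mulVec (fun j => z t j + Complex.exp (η * (t : ℂ)) * z₀ j) i
            + Complex.exp (η * (t : ℂ)) * g i) t) ∧
      C.mulVec (fun j => z t j + Complex.exp (η * (t : ℂ)) * z₀ j)
          + D.mulVec (fun j => Complex.exp (η * (t : ℂ)) * g j)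
        = C.mulVec (z t) := by
  rw [sub_mulVec, smul_mulVec, one_mulVec] at hker1
  intro t
  set e : ℂ := Complex.exp (η * (t : ℂ)) with he
  have hv : (fun j => z t j + e * z₀ j) = z t + e • z₀ := rfl
  constructor
  · intro i
    have h1 : HasDerivAt (fun s : ℝ => η * (s : ℂ)) η t := by
      simpa using (Complex.ofRealCLM.hasDerivAt (x := t)).const_mul η
    have hexp : HasDerivAt (fun s : ℝ => Complex.exp (η * (s : ℂ))) (e * η) t :=
      (Complex.hasDerivAt_exp (η * (t : ℂ))).comp t h1
    have hd := (hz t i).add (hexp.mul_const (z₀ i))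
    refine hd.congr_deriv ?_
    rw [hv, mulVec_add, mulVec_smul]
    have hg : g i = η * z₀ i - A.mulVec z₀ i := by
      have := congrFun hker1 i
      simp only [Pi.sub_apply, Pi.smul_apply, smul_eq_mul] at this
      linear_combination -this
    simp only [Pi.add_apply, Pi.smul_apply, smul_eq_mul, hg]
    ring
  · rw [hv, mulVec_add, mulVec_smul]
    have hv2 : (fun j => e * g j) = e • g := rfl
    rw [hv2, mulVec_smul]
    have h0 : e • C.mulVec z₀ + e • D.mulVec g = 0 := by
      rw [← smul_add, hker2, smul_zero]
    rw [add_assoc, h0, add_zero]
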